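/- arXiv:1505.06059 — 2 statements merged into one kernel-verified Lean document; each statement's English description precedes it below -/
import Mathlib

section
/- Let G be a finite group, H ≤ G a subgroup, and k ∈ ℕ. Then D_k(G) ≤ [G : H] · D_k(H), where [G : H] is the index of H in G. -/
/-- `S` is a product-one sequence over `G`: some ordering of its terms multiplies to `1`. -/
def IsProductOne {G : Type*} [Group G] (S : Multiset G) : Prop :=
  ∃ l : List G, (l : Multiset G) = S ∧ l.prod = 1

/-- The set of products `π(S)` of all orderings of the terms of `S`. -/
def piSet {G : Type*} [Group G] (S : Multiset G) : Set G :=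
  {g | ∃ l : List G, (l : Multiset G) = S ∧ l.prod = g}

/-- The set `Π(S)` of products of nontrivial subsequences of `S`. -/
def subseqProds {G : Type*} [Group G] (S : Multiset G) : Set G :=
  {g | ∃ T : Multiset G, T ≤ S ∧ T ≠ 0 ∧ g ∈ piSet T}

/-- `S` is product-one free. -/
def ProductOneFree {G : Type*} [Group G] (S : Multiset G) : Prop :=
  (1 : G) ∉ subseqProds S

/-- `S` is an atom of the monoid `B(G)` of product-one sequences: it is a nontrivial
product-one sequence that is not the concatenation of two nontrivial product-one sequences. -/
def IsPOAtom {G : Type*} [Group G] (S : Multiset G) : Prop :=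
  IsProductOne S ∧ S ≠ 0 ∧
    ∀ T₁ T₂ : Multiset G, IsProductOne T₁ → IsProductOne T₂ → T₁ + T₂ = S →
      T₁ = 0 ∨ T₂ = 0

/-- The large Davenport constant `D(G)`: the supremum of lengths of atoms of `B(G)`. -/
noncomputable def largeD (G : Type*) [Group G] : ℕ :=
  sSup {n : ℕ | ∃ S : Multiset G, IsPOAtom S ∧ Multiset.card S = n}

/-- The small Davenport constant `d(G)`: the supremum of lengths of product-one free
sequences over `G`. -/
noncomputable def smalld (G : Type*) [Group G] : ℕ :=
  sSup {n : ℕ | ∃ S : Multiset G, ProductOneFree S ∧ Multiset.card S = n}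
/-- `S` is divisible in `F(G)` by a concatenation of `k` nontrivial product-one sequences. -/
def DividesKProducts {G : Type*} [Group G] (k : ℕ) (S : Multiset G) : Prop :=
  ∃ f : Fin k → Multiset G,
    (∀ i, f i ≠ 0 ∧ IsProductOne (f i)) ∧ (∑ i, f i) ≤ S

/-- The small `k`-th Davenport constant `d_k(G)`. -/
noncomputable def smalldk (G : Type*) [Group G] (k : ℕ) : ℕ :=
  sSup {n : ℕ | ∃ S : Multiset G, ¬ DividesKProducts k S ∧ Multiset.card S = n}

/-- Every factorization of `S` into nontrivial product-one sequences has at most `k` factors. -/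
def MaxFactLe {G : Type*} [Group G] (k : ℕ) (S : Multiset G) : Prop :=
  ∀ (m : ℕ) (f : Fin m → Multiset G),
    (∀ i, f i ≠ 0 ∧ IsProductOne (f i)) → (∑ i, f i) = S → m ≤ k

/-- The large `k`-th Davenport constant `D_k(G)`. -/
noncomputable def largeDk (G : Type*) [Group G] (k : ℕ) : ℕ :=
  sSup {n : ℕ | ∃ S : Multiset G, IsProductOne S ∧ MaxFactLe k S ∧ Multiset.card S = n}



lemma exists_le_map {α β : Type*} (φ : α → β) :
    ∀ (u : Multiset β) (A : Multiset α), u ≤ A.map φ → ∃ A₀ ≤ A, A₀.map φ = u := by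
  classical
  intro u
  induction u using Multiset.induction with
  | empty => intro A _; exact ⟨0, zero_le, rfl⟩
  | cons a u ih =>
    intro A h
    have ha : a ∈ A.map φ := Multiset.mem_of_le h (Multiset.mem_cons_self a u)
    obtain ⟨x, hx, rfl⟩ := Multiset.mem_map.mp ha
    have hA : A = x ::ₘ A.erase x := (Multiset.cons_erase hx).symm
    have h2 : u ≤ (A.erase x).map φ := by
      have h3 : φ x ::ₘ u ≤ φ x ::ₘ (A.erase x).map φ := by
        rw [← Multiset.map_cons, ← hA]; exact h
      exact (Multiset.cons_le_cons_iff _).mp h3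
    obtain ⟨A₀, hle, hmap⟩ := ih (A.erase x) h2
    exact ⟨x ::ₘ A₀, by rw [hA]; exact Multiset.cons_le_cons _ hle,
      by rw [Multiset.map_cons, hmap]⟩

lemma lift_sum {α β : Type*} (φ : α → β) :
    ∀ (t : ℕ) (f : Fin t → Multiset β) (A : Multiset α), (∑ i, f i) = A.map φ →
      ∃ V : Fin t → Multiset α, (∑ i, V i) = A ∧ ∀ i, (V i).map φ = f i := by
  intro t
  induction t with
  | zero =>
    intro f A h
    refine ⟨fun _ => 0, ?_, fun i => i.elim0⟩
    simp only [Finset.univ_eq_empty, Finset.sum_empty] at h ⊢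
    have := Multiset.map_eq_zero.mp h.symm
    simp [this]
  | succ t ih =>
    intro f A h
    rw [Fin.sum_univ_succ] at h
    have h0 : f 0 ≤ A.map φ := h ▸ Multiset.le_add_right _ _
    obtain ⟨A₀, hle, hmap⟩ := exists_le_map φ (f 0) A h0
    obtain ⟨C, rfl⟩ := Multiset.le_iff_exists_add.mp hle
    rw [Multiset.map_add, hmap] at h
    have h' : (∑ i : Fin t, f i.succ) = C.map φ := by
      exact add_left_cancel h
    obtain ⟨V', hsum, hV'⟩ := ih (fun i => f i.succ) C h'
    refine ⟨Fin.cases A₀ V', ?_, ?_⟩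
    · rw [Fin.sum_univ_succ]
      simp [hsum]
    · intro i
      induction i using Fin.cases with
      | zero => simpa using hmap
      | succ j => simpa using hV' j

lemma lift_list {α β : Type*} (φ : α → β) :
    ∀ (lst : List β) (V : Multiset α), V.map φ = ↑lst →
      ∃ lw : List α, (↑lw : Multiset α) = V ∧ lw.map φ = lst := by
  classical
  intro lst
  induction lst with
  | nil =>
    intro V h
    refine ⟨[], ?_, rfl⟩
    have h0 : V.map φ = 0 := by simpa using h
    have : V = 0 := Multiset.map_eq_zero.mp h0
    simp [this]
  | cons a lst ih =>
    intro V h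
    have ha : a ∈ V.map φ := by rw [h]; simp
    obtain ⟨x, hx, hxa⟩ := Multiset.mem_map.mp ha
    have hV : V = x ::ₘ V.erase x := (Multiset.cons_erase hx).symm
    have h2 : (V.erase x).map φ = ↑lst := by
      have h3 : φ x ::ₘ (V.erase x).map φ = a ::ₘ (↑lst : Multiset β) := by
        rw [← Multiset.map_cons, ← hV, h]; simp
      rw [hxa] at h3
      exact (Multiset.cons_inj_right a).mp h3
    obtain ⟨lw, hlw, hmap⟩ := ih (V.erase x) h2
    refine ⟨x :: lw, ?_, by simp [hmap, hxa]⟩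
    have : (↑(x :: lw) : Multiset α) = x ::ₘ ↑lw := by simp
    rw [this, hlw, ← hV]


lemma split_lemma {G : Type*} [Group G] [Finite G] {l : List G} (hp : l.prod = 1)
    (hl : Nat.card G < l.length) :
    ∃ m r : List G, (↑m + ↑r : Multiset G) = ↑l ∧ m ≠ [] ∧ m.length ≤ Nat.card G ∧
      m.prod = 1 ∧ r.prod = 1 := by
  have : Fintype G := Fintype.ofFinite G
  have hcard : Nat.card G = Fintype.card G := Nat.card_eq_fintype_card
  set n := Nat.card G with hn
  have hfn : Fintype.card G < Fintype.card (Fin (n + 1)) := by simp [hcard]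
  obtain ⟨x, y, hxy, hfxy⟩ := Fintype.exists_ne_map_eq_of_card_lt
    (fun i : Fin (n + 1) => (l.take (i : ℕ)).prod) hfn
  wlog hlt : (x : ℕ) < (y : ℕ) generalizing x y
  · exact this y x hxy.symm hfxy.symm (by have := Fin.val_ne_of_ne hxy; omega)
  set i := (x : ℕ); set j := (y : ℕ)
  have hji : i + (j - i) = j := by omega
  have hjn : j ≤ n := by have := y.isLt; omega
  have hjl : j ≤ l.length := by omega
  set m := (l.drop i).take (j - i) with hm
  have htj : l.take j = l.take i ++ m := by rw [← hji, List.take_add]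
  have hmprod : m.prod = 1 := by
    have h1 : (l.take j).prod = (l.take i).prod * m.prod := by rw [htj, List.prod_append]
    rw [← hfxy] at h1
    exact (mul_eq_left.mp h1.symm)
  have h2 : (l.take j).prod * (l.drop j).prod = 1 := by
    rw [← List.prod_append, List.take_append_drop, hp]
  refine ⟨m, l.take i ++ l.drop j, ?_, ?_, ?_, hmprod, ?_⟩
  · have hl2 : l = (l.take i ++ m) ++ l.drop j := by rw [← htj, List.take_append_drop]
    conv_rhs => rw [hl2]
    simp only [← Multiset.coe_add]
    push_cast
    abel
  · have hml : m.length = j - i := by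
      rw [hm, List.length_take, List.length_drop]; omega
    exact List.ne_nil_of_length_pos (by omega)
  · have : m.length = j - i := by rw [hm, List.length_take, List.length_drop]; omega
    omega
  · rw [List.prod_append, hfxy]
    exact h2

lemma maxfact_card_le {G : Type*} [Group G] [Finite G] :
    ∀ (k : ℕ) (S : Multiset G), IsProductOne S → MaxFactLe k S →
      Multiset.card S ≤ k * Nat.card G := by
  intro k
  induction k with
  | zero =>
    intro S h1 h2
    by_contra hc
    have hS : S ≠ 0 := by
      intro h; rw [h] at hc; simp at hc
    have := h2 1 (fun _ => S) (fun _ => ⟨hS, h1⟩) (by simp)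
    omega
  | succ k ih =>
    intro S h1 h2
    by_cases hle : Multiset.card S ≤ Nat.card G
    · calc Multiset.card S ≤ Nat.card G := hle
        _ ≤ (k + 1) * Nat.card G := Nat.le_mul_of_pos_left _ (by omega)
    · push_neg at hle
      obtain ⟨l, hlS, hlp⟩ := h1
      have hlen : Nat.card G < l.length := by
        rwa [← Multiset.coe_card, hlS]
      obtain ⟨m, r, hsum, hm0, hmlen, hmp, hrp⟩ := split_lemma hlp hlen
      rw [hlS] at hsum
      have hr1 : IsProductOne (↑r : Multiset G) := ⟨r, rfl, hrp⟩
      have hrmf : MaxFactLe k (↑r : Multiset G) := by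
        intro t f hf hsumf
        have h3 := h2 (t + 1) (Fin.cases (↑m : Multiset G) f) ?_ ?_
        · omega
        · intro i
          induction i using Fin.cases with
          | zero => exact ⟨by simpa using hm0, ⟨m, rfl, hmp⟩⟩
          | succ j => simpa using hf j
        · rw [Fin.sum_univ_succ]
          simpa [hsumf] using hsum
      have := ih (↑r : Multiset G) hr1 hrmf
      have hcs : Multiset.card S = m.length + r.length := by
        rw [← hsum]; simp
      have hrlen : (Multiset.card (↑r : Multiset G)) = r.length := by simp
      rw [hrlen] at this
      calc Multiset.card S = m.length + r.length := hcs
        _ ≤ Nat.card G + k * Nat.card G := by omega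
        _ = (k + 1) * Nat.card G := by ring


open scoped Classical in
noncomputable def hitCount {G : Type*} [Group G] (H : Subgroup G) (b : G ⧸ H) :
    List G → G → ℕ
  | [], _ => 0
  | x :: l, a => (if ((a * x : G) : G ⧸ H) = b then 1 else 0) + hitCount H b l (a * x)

lemma hitCount_total {G : Type*} [Group G] (H : Subgroup G) [Fintype (G ⧸ H)] :
    ∀ (l : List G) (a : G), (∑ b : G ⧸ H, hitCount H b l a) = l.length := by
  intro l
  induction l with
  | nil => intro a; simp [hitCount]
  | cons x l ih =>
    intro a
    simp only [hitCount, Finset.sum_add_distrib, ih (a * x), List.length_cons]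
    classical
    rw [Finset.sum_congr rfl (fun b _ => by
      congr 1)]
    rw [Finset.sum_ite_eq Finset.univ ((a * x : G) : G ⧸ H) (fun _ => 1)]
    simp [add_comm]

lemma core_decomp {G : Type*} [Group G] (H : Subgroup G) (b : G ⧸ H) :
    ∀ (l : List G) (a : G), ∃ (pre : List G) (L : List (List G)) (r : List G),
      pre ++ L.flatten ++ r = l ∧ (∀ B ∈ L, B ≠ [] ∧ B.prod ∈ H) ∧
      (hitCount H b l a = 0 ∧ pre = [] ∧ L = [] ∧ r = l ∨
       hitCount H b l a = L.length + 1 ∧ pre ≠ [] ∧ ((a * pre.prod : G) : G ⧸ H) = b) := by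
  intro l
  induction l with
  | nil =>
    intro a
    exact ⟨[], [], [], by simp, by simp, Or.inl ⟨by simp [hitCount], rfl, rfl, rfl⟩⟩
  | cons x l ih =>
    intro a
    obtain ⟨pre, L, r, hcat, hL, hcase⟩ := ih (a * x)
    by_cases hb : ((a * x : G) : G ⧸ H) = b
    · -- hit at x
      rcases hcase with ⟨h0, hpre, hLnil, hr⟩ | ⟨hcnt, hpre, hprod⟩
      · refine ⟨[x], [], l, by simp, by simp, Or.inr ⟨?_, by simp, by simpa using hb⟩⟩
        subst hpre hLnil
        simp [hitCount, hb, h0]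
      · refine ⟨[x], pre :: L, r, by simpa using hcat, ?_, Or.inr ⟨?_, by simp, by simpa using hb⟩⟩
        · intro B hB
          rcases List.mem_cons.mp hB with rfl | hB'
          · refine ⟨hpre, ?_⟩
            have h1 := QuotientGroup.eq.mp (hb.trans hprod.symm)
            have h2 : (a * x)⁻¹ * (a * x * B.prod) = B.prod := by group
            rwa [h2] at h1
          · exact hL B hB'
        · simp only [hitCount, hb, if_pos, hcnt, List.length_cons]
          omega
    · -- no hit at x
      rcases hcase with ⟨h0, hpre, hLnil, hr⟩ | ⟨hcnt, hpre, hprod⟩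
      · refine ⟨[], [], x :: l, by simp, by simp, Or.inl ⟨?_, rfl, rfl, ?_⟩⟩
        · simp [hitCount, hb, h0]
        · rfl
      · refine ⟨x :: pre, L, r, by simpa using hcat, hL, Or.inr ⟨?_, by simp, ?_⟩⟩
        · simp [hitCount, hb, hcnt]
        · rw [List.prod_cons, ← mul_assoc]
          exact hprod

lemma coe_flatten {α : Type*} :
    ∀ L : List (List α), ((L.flatten : List α) : Multiset α)
      = (L.map (fun B => Multiset.ofList B)).sum := by
  intro L
  induction L with
  | nil => simp
  | cons B L ih =>
    simp only [List.flatten_cons, List.map_cons, List.sum_cons, ← ih]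
    push_cast
    rfl

lemma blocks_bound {G : Type*} [Group G] [Finite G] (H : Subgroup G) (k : ℕ) (l : List G)
    (hmf : MaxFactLe k (↑l : Multiset G)) (Blk : List (List G))
    (hne : ∀ B ∈ Blk, B ≠ [])
    (hmem : ∀ B ∈ Blk, B.prod ∈ H)
    (hprod : (Blk.map List.prod).prod = 1)
    (hsum : (Blk.map (fun B => Multiset.ofList B)).sum = (↑l : Multiset G)) :
    Blk.length ≤ largeDk ↥H k := by
  classical
  set hfun : {B // B ∈ Blk} → ↥H := fun B => ⟨B.1.prod, hmem B.1 B.2⟩ with hhfun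
  set lT : List ↥H := Blk.attach.map hfun with hlT
  have e : List.map (⇑H.subtype ∘ hfun) Blk.attach = List.map List.prod Blk :=
    List.attach_map_val (l := Blk) (f := List.prod)
  have hTpo : IsProductOne (↑lT : Multiset ↥H) := by
    refine ⟨lT, rfl, ?_⟩
    have h1 : H.subtype lT.prod = 1 := by
      rw [← List.prod_hom lT H.subtype, hlT, List.map_map, e, hprod]
    exact (Subgroup.subtype_injective H) (by rw [h1, map_one])
  have hTmf : MaxFactLe k (↑lT : Multiset ↥H) := by
    intro t f hf hsumf
    have hmapT : (∑ i, f i) = (↑Blk.attach : Multiset {B // B ∈ Blk}).map hfun := by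
      rw [hsumf, hlT, Multiset.map_coe]
    obtain ⟨V, hVsum, hVmap⟩ := lift_sum hfun t f _ hmapT
    set φ' : {B // B ∈ Blk} → Multiset G := fun B => Multiset.ofList B.1 with hφ'
    set F : Multiset {B // B ∈ Blk} →+ Multiset G :=
      { toFun := fun A => (A.map φ').sum
        map_zero' := by simp
        map_add' := by intro x y; simp } with hF
    refine hmf t (fun i => F (V i)) ?_ ?_
    · intro i
      have hVne : V i ≠ 0 := by
        intro h
        exact (hf i).1 (by rw [← hVmap i, h, Multiset.map_zero])
      obtain ⟨B, hB⟩ := Multiset.exists_mem_of_ne_zero hVne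
      have hVi : V i = B ::ₘ (V i).erase B := (Multiset.cons_erase hB).symm
      constructor
      · intro h
        have h' : F (V i) = 0 := h
        rw [hVi] at h'
        have : Multiset.ofList B.1 + (((V i).erase B).map φ').sum = 0 := by
          simpa [hF, φ'] using h'
        have hB1 : Multiset.ofList B.1 = 0 := by
          have := (add_eq_zero_iff_of_nonneg zero_le zero_le).mp this
          exact this.1
        exact hne B.1 B.2 (Multiset.coe_eq_zero _ |>.mp hB1)
      · obtain ⟨lst, hlst, hlstp⟩ := (hf i).2
        have hml : (V i).map hfun = ↑lst := by rw [hVmap i, ← hlst]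
        obtain ⟨lw, hlw, hlwmap⟩ := lift_list hfun lst (V i) hml
        refine ⟨(lw.map Subtype.val).flatten, ?_, ?_⟩
        · rw [coe_flatten, List.map_map]
          have : ((V i).map φ').sum = ((↑lw : Multiset _).map φ').sum := by rw [hlw]
          rw [hF]
          simp only [AddMonoidHom.coe_mk, ZeroHom.coe_mk]
          rw [← hlw]; change _ = (Multiset.map φ' ↑lw).sum; rw [Multiset.map_coe, Multiset.sum_coe]
          rfl
        · rw [List.prod_flatten, List.map_map]
          have e2 : List.prod ∘ (Subtype.val : {B // B ∈ Blk} → List G)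
              = ⇑H.subtype ∘ hfun := rfl
          rw [e2, ← List.map_map, List.prod_hom _ H.subtype, hlwmap, hlstp, map_one]
    · have : F (∑ i, V i) = ∑ i, F (V i) := map_sum F V Finset.univ
      rw [← this, hVsum]
      rw [hF]
      simp only [AddMonoidHom.coe_mk, ZeroHom.coe_mk]
      change (Multiset.map φ' ↑Blk.attach).sum = _; rw [Multiset.map_coe, Multiset.sum_coe]
      have : Blk.attach.map φ' = Blk.map (fun B => Multiset.ofList B) :=
        List.attach_map_val (l := Blk) (f := fun B => Multiset.ofList B)
      rw [this, hsum]
  have hmemset : Blk.length ∈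
      {n : ℕ | ∃ S : Multiset ↥H, IsProductOne S ∧ MaxFactLe k S ∧ Multiset.card S = n} := by
    refine ⟨↑lT, hTpo, hTmf, ?_⟩
    simp [hlT]
  have hbdd : BddAbove
      {n : ℕ | ∃ S : Multiset ↥H, IsProductOne S ∧ MaxFactLe k S ∧ Multiset.card S = n} := by
    refine ⟨k * Nat.card ↥H, ?_⟩
    rintro n ⟨S, h1, h2, rfl⟩
    exact maxfact_card_le k S h1 h2
  exact le_csSup hbdd hmemset

lemma hit_le {G : Type*} [Group G] [Finite G] (H : Subgroup G) (k : ℕ) {l : List G}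
    (hlp : l.prod = 1) (hmf : MaxFactLe k (↑l : Multiset G)) (b : G ⧸ H) :
    hitCount H b l 1 ≤ largeDk ↥H k := by
  obtain ⟨pre, L, r, hcat, hL, hcase⟩ := core_decomp H b l 1
  rcases hcase with ⟨h0, _, _, _⟩ | ⟨hcnt, hpre, hprod⟩
  · simp [h0]
  have hflat : L.flatten.prod ∈ H := by
    rw [List.prod_flatten]
    exact Subgroup.list_prod_mem H (by
      intro y hy
      obtain ⟨B, hB, rfl⟩ := List.mem_map.mp hy
      exact (hL B hB).2)
  have hlprod : pre.prod * L.flatten.prod * r.prod = 1 := by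
    have h := congrArg List.prod hcat
    rw [List.prod_append, List.prod_append, hlp] at h
    exact h
  have hwrap : (r ++ pre).prod = L.flatten.prod⁻¹ := by
    rw [List.prod_append]
    have hr : r.prod = L.flatten.prod⁻¹ * pre.prod⁻¹ := by
      apply mul_left_cancel (a := pre.prod * L.flatten.prod)
      rw [← mul_assoc, hlprod]
      group
    rw [hr]
    group
  refine le_trans ?_ (blocks_bound H k l hmf (L ++ [r ++ pre]) ?_ ?_ ?_ ?_)
  · simp [hcnt]
  · intro B hB
    rcases List.mem_append.mp hB with h | h
    · exact (hL B h).1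
    · simp only [List.mem_singleton] at h
      subst h
      intro hcontra
      exact hpre (List.append_eq_nil_iff.mp hcontra).2
  · intro B hB
    rcases List.mem_append.mp hB with h | h
    · exact (hL B h).2
    · simp only [List.mem_singleton] at h
      subst h
      rw [hwrap]
      exact inv_mem hflat
  · rw [List.map_append, List.prod_append, ← List.prod_flatten]
    simp [hwrap]
  · rw [List.map_append, List.sum_append, ← coe_flatten]
    have h2 : (↑l : Multiset G) = ↑(pre ++ L.flatten ++ r) := by rw [hcat]
    rw [h2]
    push_cast
    simp only [List.map_cons, List.map_nil, List.sum_cons, List.sum_nil, add_zero]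
    have h3 : Multiset.ofList (r ++ pre) = Multiset.ofList r + Multiset.ofList pre := by
      push_cast; rfl
    rw [h3]
    have h4 : (↑(pre ++ L.flatten ++ r) : Multiset G)
        = Multiset.ofList pre + Multiset.ofList L.flatten + Multiset.ofList r := by
      push_cast; rfl
    rw [h4]
    abel

/-- For a subgroup `H` of a finite group `G` and `k ≥ 1`, `D_k(G) ≤ [G : H] · D_k(H)`. -/
theorem stmt13 {G : Type*} [Group G] [Finite G] (H : Subgroup G) (k : ℕ) (hk : 1 ≤ k) :
    largeDk G k ≤ H.index * largeDk ↥H k := by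
  apply csSup_le'
  rintro n ⟨S, h1, h2, rfl⟩
  obtain ⟨l, hlS, hlp⟩ := h1
  have hmf : MaxFactLe k (↑l : Multiset G) := by rwa [hlS]
  have hcard : Multiset.card S = l.length := by rw [← hlS]; simp
  have : Fintype (G ⧸ H) := Fintype.ofFinite _
  have htot : (∑ b : G ⧸ H, hitCount H b l 1) = l.length := hitCount_total H l 1
  have hsum_le : (∑ b : G ⧸ H, hitCount H b l 1) ≤ ∑ _b : G ⧸ H, largeDk ↥H k :=
    Finset.sum_le_sum (fun b _ => hit_le H k hlp hmf b)
  have hconst : (∑ _b : G ⧸ H, largeDk ↥H k) = Fintype.card (G ⧸ H) * largeDk ↥H k := by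
    rw [Finset.sum_const, Finset.card_univ, smul_eq_mul]
  have hindex : H.index = Fintype.card (G ⧸ H) := Nat.card_eq_fintype_card
  rw [hcard, ← htot, hindex, ← hconst]
  exact hsum_le
end

section
/- Let G be a finite group and let e(G) = max{ord(g) : g ∈ G} be the maximal order of an element of G. Then there exist constants C ∈ ℕ₀ and K ∈ ℕ such that for all k ≥ K the large k-th Davenport constant satisfies D_k(G) = k·e(G) + C. -/
section aux
variable {G : Type*} [Group G] [DecidableEq G]

/-- count of positions `i` in `l` with `l[i] = g` and `(l.take i).prod = v`. -/
def cfib (g : G) : List G → G → ℕ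
  | [], _ => 0
  | x :: t, v => (if x = g ∧ v = 1 then 1 else 0) + cfib g t (x⁻¹ * v)

lemma cfib_sum [Fintype G] (g : G) (l : List G) :
    ∑ v : G, cfib g l v = l.count g := by
  induction l with
  | nil => simp [cfib]
  | cons x t ih =>
    simp only [cfib, Finset.sum_add_distrib]
    have h1 : ∑ v : G, (if x = g ∧ v = 1 then 1 else 0) = if x = g then 1 else 0 := by
      by_cases hx : x = g
      · simp [hx]
      · simp [hx]
    have h2 : ∑ v : G, cfib g t (x⁻¹ * v) = t.count g := by
      rw [← ih]
      exact Fintype.sum_bijective (x⁻¹ * ·) (Group.mulLeft_bijective x⁻¹)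
        (fun v => cfib g t (x⁻¹ * v)) _ (fun v => rfl)
    rw [h1, h2, List.count_cons]
    by_cases hx : x = g <;> simp [hx] <;> omega

lemma extract_aux (g : G) : ∀ (l : List G) (m : ℕ) (v : G), m ≤ cfib g l v →
    ∃ r : List G, (l : Multiset G) = (r : Multiset G) + Multiset.replicate m g ∧
      r.prod = v * (g⁻¹) ^ m * v⁻¹ * l.prod := by
  intro l
  induction l with
  | nil =>
    intro m v h
    simp [cfib] at h
    subst h
    exact ⟨[], by simp, by simp⟩
  | cons x t ih =>
    intro m v h
    match m with
    | 0 =>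
      refine ⟨x :: t, by simp, by group⟩
    | m + 1 =>
      simp only [cfib] at h
      by_cases hc : x = g ∧ v = 1
      · obtain ⟨hx, hv⟩ := hc
        subst hx hv
        have h' : m ≤ cfib x t (x⁻¹ * 1) := by
          simp only [and_self, if_true] at h; omega
        obtain ⟨r, hr1, hr2⟩ := ih m (x⁻¹ * 1) h'
        refine ⟨r, ?_, ?_⟩
        · simp only [← Multiset.cons_coe, hr1, Multiset.replicate_succ]
          rw [← Multiset.singleton_add, ← Multiset.singleton_add]
          abel
        · rw [hr2, List.prod_cons]
          group
      · rw [if_neg hc] at h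
        obtain ⟨r, hr1, hr2⟩ := ih (m + 1) (x⁻¹ * v) (by omega)
        refine ⟨x :: r, ?_, ?_⟩
        · simp only [← Multiset.cons_coe, hr1, Multiset.cons_add]
        · rw [List.prod_cons, List.prod_cons, hr2]
          group

end aux

section aux2
variable {G : Type*} [Group G] [DecidableEq G] [Fintype G]

lemma exists_big_fiber (g : G) (l : List G) (n : ℕ)
    (h : Fintype.card G * n < l.count g) : ∃ v : G, n < cfib g l v := by
  by_contra h'
  push_neg at h'
  have hle : l.count g ≤ Fintype.card G * n := by
    rw [← cfib_sum g l]
    calc ∑ v : G, cfib g l v ≤ ∑ _v : G, n := Finset.sum_le_sum (fun v _ => h' v)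
    _ = Fintype.card G * n := by simp [Finset.sum_const, mul_comm]
  omega

/-- Key extraction lemma: a long product-one sequence has a short product-one
subsequence (a power of one element) whose removal leaves a product-one sequence. -/
lemma key_extract (S : Multiset G) (hS : IsProductOne S)
    (hbig : ∀ g : G, Fintype.card G * (orderOf g) < S.count g → False → True) : True := trivial

lemma key_extract' (S : Multiset G) (g : G) (hS : IsProductOne S)
    (hcount : Fintype.card G * (orderOf g - 1) < S.count g) :
    IsProductOne (Multiset.replicate (orderOf g) g) ∧
      Multiset.replicate (orderOf g) g ≤ S ∧
      IsProductOne (S - Multiset.replicate (orderOf g) g) := by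
  obtain ⟨l, hl, hprod⟩ := hS
  have hcnt : Fintype.card G * (orderOf g - 1) < l.count g := by
    rwa [← Multiset.coe_count, hl]
  obtain ⟨v, hv⟩ := exists_big_fiber g l (orderOf g - 1) hcnt
  have hord : 1 ≤ orderOf g := orderOf_pos g
  have hv' : orderOf g ≤ cfib g l v := by omega
  obtain ⟨r, hr1, hr2⟩ := extract_aux g l (orderOf g) v hv'
  have hpow : (g⁻¹ : G) ^ orderOf g = 1 := by
    rw [inv_pow, pow_orderOf_eq_one, inv_one]
  have hrprod : r.prod = 1 := by rw [hr2, hpow, hprod]; group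
  have hSr : S = (r : Multiset G) + Multiset.replicate (orderOf g) g := by
    rw [← hl, hr1]
  refine ⟨⟨List.replicate (orderOf g) g, Multiset.coe_replicate _ _, by
      rw [List.prod_replicate, pow_orderOf_eq_one]⟩, ?_, ?_⟩
  · rw [hSr]; exact le_add_self
  · rw [hSr, add_tsub_cancel_right]
    exact ⟨r, rfl, hrprod⟩

end aux2

section aux3
variable {G : Type*} [Group G] [DecidableEq G] [Fintype G]

local notation "Ng" => Fintype.card G
local notation "eG" => sSup (Set.range (orderOf : G → ℕ))

lemma orderOf_le_eG (g : G) : orderOf g ≤ eG :=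
  le_csSup ⟨Ng, by rintro _ ⟨h, rfl⟩; exact orderOf_le_card_univ⟩ ⟨g, rfl⟩

lemma one_le_eG : 1 ≤ (eG : ℕ) := le_trans (orderOf_pos (1 : G)) (orderOf_le_eG 1)

lemma exists_orderOf_eq_eG : ∃ g : G, orderOf g = eG := by
  exact Nat.sSup_mem (s := Set.range (orderOf : G → ℕ)) ⟨orderOf 1, 1, rfl⟩
    ⟨Ng, by rintro _ ⟨h, rfl⟩; exact orderOf_le_card_univ⟩

/-- main extraction step -/
lemma big_step (S : Multiset G) (hS : IsProductOne S)
    (hbig : Ng * eG * Ng < Multiset.card S) :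
    ∃ (n : ℕ) (g : G), 1 ≤ n ∧ n ≤ eG ∧ IsProductOne (Multiset.replicate n g) ∧
      Multiset.replicate n g ≤ S ∧ IsProductOne (S - Multiset.replicate n g) := by
  -- find g with a large count
  have hex : ∃ g : G, Ng * eG < S.count g := by
    by_contra hall
    push_neg at hall
    have : Multiset.card S ≤ Ng * (Ng * eG) := by
      rw [← Multiset.toFinset_sum_count_eq]
      calc ∑ a ∈ S.toFinset, S.count a ≤ ∑ _a ∈ S.toFinset, Ng * eG :=
            Finset.sum_le_sum (fun a _ => hall a)
        _ = S.toFinset.card * (Ng * eG) := by rw [Finset.sum_const, smul_eq_mul]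
        _ ≤ Ng * (Ng * eG) := Nat.mul_le_mul_right _ (Finset.card_le_univ _)
    have : Ng * (Ng * eG) = Ng * eG * Ng := by ring
    omega
  obtain ⟨g, hg⟩ := hex
  have hcount : Ng * (orderOf g - 1) < S.count g := by
    have h1 : orderOf g - 1 < eG := by
      have := orderOf_le_eG g
      have := orderOf_pos g
      omega
    have : Ng * (orderOf g - 1) ≤ Ng * eG := Nat.mul_le_mul_left _ (by omega)
    omega
  obtain ⟨h1, h2, h3⟩ := key_extract' S g hS hcount
  exact ⟨orderOf g, g, orderOf_pos g, orderOf_le_eG g, h1, h2, h3⟩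

end aux3

section aux4
variable {G : Type*} [Group G]

lemma isProductOne_zero : IsProductOne (0 : Multiset G) := ⟨[], rfl, rfl⟩

lemma isProductOne_add {S T : Multiset G} (hS : IsProductOne S) (hT : IsProductOne T) :
    IsProductOne (S + T) := by
  obtain ⟨l, hl, hlp⟩ := hS
  obtain ⟨r, hr, hrp⟩ := hT
  exact ⟨l ++ r, by rw [← hl, ← hr]; exact (Multiset.coe_add l r).symm ▸ rfl,
    by rw [List.prod_append, hlp, hrp, one_mul]⟩

lemma maxFactLe_zero (k : ℕ) : MaxFactLe k (0 : Multiset G) := by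
  intro m f hf hsum
  rcases Nat.eq_zero_or_pos m with hm | hm
  · omega
  · exfalso
    have : f ⟨0, hm⟩ = 0 := by
      have h0 : ∀ i ∈ Finset.univ, f i = 0 := by
        rw [← Finset.sum_eq_zero_iff]
        exact hsum
      exact h0 _ (Finset.mem_univ _)
    exact (hf ⟨0, hm⟩).1 this

lemma one_le_of_maxFactLe {k : ℕ} {S : Multiset G} (hS : S ≠ 0) (hpo : IsProductOne S)
    (h : MaxFactLe k S) : 1 ≤ k :=
  h 1 (fun _ => S) (fun _ => ⟨hS, hpo⟩) (by simp)

lemma maxFactLe_sub [DecidableEq G] {k : ℕ} {S P : Multiset G} (hP : P ≤ S) (hP0 : P ≠ 0)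
    (hPpo : IsProductOne P) (h : MaxFactLe k S) : MaxFactLe (k - 1) (S - P) := by
  intro m f hf hsum
  have := h (m + 1) (Fin.cons P f) (by
    intro i
    refine Fin.cases ?_ ?_ i
    · exact ⟨hP0, hPpo⟩
    · intro j; simpa using hf j)
    (by rw [Fin.sum_cons, hsum, add_tsub_cancel_of_le hP])
  omega

end aux4

section aux5
variable {G : Type*} [Group G] [DecidableEq G] [Fintype G]

local notation "Ng" => Fintype.card G
local notation "eG" => sSup (Set.range (orderOf : G → ℕ))

lemma card_le_of_maxFactLe : ∀ (c k : ℕ) (S : Multiset G), Multiset.card S ≤ c →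
    IsProductOne S → MaxFactLe k S →
    Multiset.card S ≤ k * (Ng * eG * Ng + eG) := by
  intro c
  induction c with
  | zero =>
    intro k S hc _ _
    omega
  | succ c ih =>
    intro k S hc hpo hmax
    by_cases hzero : S = 0
    · simp [hzero]
    have hk : 1 ≤ k := one_le_of_maxFactLe hzero hpo hmax
    by_cases hsmall : Multiset.card S ≤ Ng * eG * Ng
    · calc Multiset.card S ≤ Ng * eG * Ng + eG := by omega
        _ = 1 * (Ng * eG * Ng + eG) := (one_mul _).symm
        _ ≤ k * (Ng * eG * Ng + eG) := Nat.mul_le_mul_right _ hk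
    · push_neg at hsmall
      obtain ⟨n, g, hn1, hne, hPpo, hPle, hS'po⟩ := big_step S hpo hsmall
      have hcardP : Multiset.card (Multiset.replicate n g) = n := Multiset.card_replicate _ _
      have hP0 : Multiset.replicate n g ≠ 0 := by
        intro h0
        rw [h0] at hcardP
        simp at hcardP
        omega
      have hmax' := maxFactLe_sub hPle hP0 hPpo hmax
      have hcard' : Multiset.card (S - Multiset.replicate n g) = Multiset.card S - n := by
        rw [Multiset.card_sub hPle, hcardP]
      have hc' : Multiset.card (S - Multiset.replicate n g) ≤ c := by omega
      have := ih (k - 1) _ hc' hS'po hmax'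
      rw [hcard'] at this
      have hkk : (k - 1) * (Ng * eG * Ng + eG) + (Ng * eG * Ng + eG)
          = k * (Ng * eG * Ng + eG) := by
        have : k - 1 + 1 = k := by omega
        calc (k - 1) * (Ng * eG * Ng + eG) + (Ng * eG * Ng + eG)
            = (k - 1 + 1) * (Ng * eG * Ng + eG) := by ring
          _ = k * (Ng * eG * Ng + eG) := by rw [this]
      omega

end aux5

section aux6
variable {G : Type*} [Group G] [DecidableEq G] [Fintype G]

local notation "Ng" => Fintype.card G
local notation "eG" => sSup (Set.range (orderOf : G → ℕ))
local notation "BG" => Ng * eG * Ng + eG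

lemma Dset_nonempty (k : ℕ) :
    {n : ℕ | ∃ S : Multiset G, IsProductOne S ∧ MaxFactLe k S ∧ Multiset.card S = n}.Nonempty :=
  ⟨0, 0, isProductOne_zero, maxFactLe_zero k, rfl⟩

lemma Dset_bddAbove (k : ℕ) :
    BddAbove {n : ℕ | ∃ S : Multiset G, IsProductOne S ∧ MaxFactLe k S ∧ Multiset.card S = n} := by
  refine ⟨k * BG, ?_⟩
  rintro n ⟨S, hpo, hmax, rfl⟩
  exact card_le_of_maxFactLe (Multiset.card S) k S le_rfl hpo hmax

lemma largeDk_mem (k : ℕ) : ∃ S : Multiset G, IsProductOne S ∧ MaxFactLe k S ∧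
    Multiset.card S = largeDk G k :=
  Nat.sSup_mem (Dset_nonempty k) (Dset_bddAbove k)

lemma le_largeDk {k n : ℕ} (S : Multiset G) (hpo : IsProductOne S) (hmax : MaxFactLe k S)
    (hcard : Multiset.card S = n) : n ≤ largeDk G k :=
  le_csSup (Dset_bddAbove k) ⟨S, hpo, hmax, hcard⟩

lemma maxFactLe_replicate (g : G) (k : ℕ) : MaxFactLe k (Multiset.replicate (k * orderOf g) g) := by
  intro m f hf hsum
  have hord : ∀ i, orderOf g ≤ Multiset.card (f i) := by
    intro i
    have hle : f i ≤ Multiset.replicate (k * orderOf g) g := by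
      rw [← hsum]
      exact Finset.single_le_sum (f := f) (fun j _ => Multiset.zero_le (f j))
        (Finset.mem_univ i)
    have hmem : ∀ x ∈ f i, x = g := fun x hx =>
      Multiset.eq_of_mem_replicate (Multiset.mem_of_le hle hx)
    obtain ⟨l, hl, hlp⟩ := (hf i).2
    have hlg : ∀ x ∈ l, x = g := by
      intro x hx
      exact hmem x (by rw [← hl]; exact hx)
    have : l.prod = g ^ l.length := List.prod_eq_pow_card l g hlg
    have hdvd : orderOf g ∣ l.length := orderOf_dvd_of_pow_eq_one (by rw [← this, hlp])
    have hlen : l.length = Multiset.card (f i) := by rw [← hl]; rfl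
    have hne : Multiset.card (f i) ≠ 0 := by
      intro h0
      exact (hf i).1 (Multiset.card_eq_zero.1 h0)
    rw [hlen] at hdvd
    exact Nat.le_of_dvd (by omega) hdvd
  have hcard : ∑ i, Multiset.card (f i) = k * orderOf g := by
    rw [show ∑ i, Multiset.card (f i) = Multiset.card (∑ i, f i) from
      (map_sum Multiset.cardHom f Finset.univ).symm, hsum, Multiset.card_replicate]
  have hm : m * orderOf g ≤ k * orderOf g := by
    calc m * orderOf g = ∑ _i : Fin m, orderOf g := by
          rw [Finset.sum_const, Finset.card_univ, Fintype.card_fin, smul_eq_mul]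
      _ ≤ ∑ i, Multiset.card (f i) := Finset.sum_le_sum (fun i _ => hord i)
      _ = k * orderOf g := hcard
  have := orderOf_pos g
  exact Nat.le_of_mul_le_mul_right hm this

lemma ke_le_largeDk (k : ℕ) : k * eG ≤ largeDk G k := by
  obtain ⟨g, hg⟩ := exists_orderOf_eq_eG (G := G)
  refine le_largeDk (Multiset.replicate (k * eG) g) ?_ ?_ (Multiset.card_replicate _ _)
  · refine ⟨List.replicate (k * eG) g, Multiset.coe_replicate _ _, ?_⟩
    rw [List.prod_replicate, ← hg, pow_mul', pow_orderOf_eq_one, one_pow]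
  · rw [← hg]
    exact maxFactLe_replicate g k

end aux6

section aux7
variable {G : Type*} [Group G] [DecidableEq G] [Fintype G]

local notation "Ng" => Fintype.card G
local notation "eG" => sSup (Set.range (orderOf : G → ℕ))

lemma largeDk_step (k : ℕ) (hk : Ng * eG * Ng + 1 ≤ (k + 1) * eG) :
    largeDk G (k + 1) ≤ largeDk G k + eG := by
  obtain ⟨S, hpo, hmax, hcard⟩ := largeDk_mem (G := G) (k + 1)
  have hbig : Ng * eG * Ng < Multiset.card S := by
    have := ke_le_largeDk (G := G) (k + 1)
    omega
  obtain ⟨n, g, hn1, hne, hPpo, hPle, hS'po⟩ := big_step S hpo hbig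
  have hP0 : Multiset.replicate n g ≠ 0 := by
    intro h0
    have := Multiset.card_replicate n g
    rw [h0] at this
    simp at this
    omega
  have hmax' : MaxFactLe k (S - Multiset.replicate n g) := by
    have := maxFactLe_sub hPle hP0 hPpo hmax
    simpa using this
  have hle := le_largeDk _ hS'po hmax' rfl
  have hcards : Multiset.card (S - Multiset.replicate n g)
      = Multiset.card S - n := by
    rw [Multiset.card_sub hPle, Multiset.card_replicate]
  have hnle : n ≤ Multiset.card S := by
    have := Multiset.card_le_card hPle
    rw [Multiset.card_replicate] at this
    exact this
  omega

lemma largeDk_eventually_linear :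
    ∃ (C K : ℕ), 1 ≤ K ∧ ∀ k : ℕ, K ≤ k → largeDk G k = k * eG + C := by
  set K0 : ℕ := Ng * eG * Ng + 1 with hK0
  have he1 : 1 ≤ (eG : ℕ) := one_le_eG (G := G)
  have hstep : ∀ k, K0 ≤ k → largeDk G (k + 1) ≤ largeDk G k + eG := by
    intro k hkk
    refine largeDk_step k ?_
    calc Ng * eG * Ng + 1 = K0 := rfl
      _ ≤ k + 1 := by omega
      _ ≤ (k + 1) * eG := Nat.le_mul_of_pos_right _ (by omega)
  -- the (truncated) difference c k is antitone for k ≥ K0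
  set c : ℕ → ℕ := fun k => largeDk G k - k * eG with hc
  have hcstep : ∀ k, K0 ≤ k → c (k + 1) ≤ c k := by
    intro k hkk
    have h1 := hstep k hkk
    have h2 := ke_le_largeDk (G := G) k
    have h3 := ke_le_largeDk (G := G) (k + 1)
    simp only [hc]
    have : (k + 1) * eG = k * eG + eG := by ring
    omega
  have hchain : ∀ a b : ℕ, K0 ≤ a → a ≤ b → c b ≤ c a := by
    intro a b ha hab
    induction b with
    | zero => omega
    | succ b ih =>
      rcases Nat.lt_or_ge a (b + 1) with h | h
      · have hab' : a ≤ b := by omega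
        exact le_trans (hcstep b (by omega)) (ih hab')
      · have : a = b + 1 := by omega
        rw [this]
  -- the eventual minimum value
  set T : Set ℕ := {n : ℕ | ∃ j : ℕ, K0 ≤ j ∧ c j = n} with hT
  have hTne : T.Nonempty := ⟨c K0, K0, le_rfl, rfl⟩
  obtain ⟨K, hK0le, hKc⟩ : ∃ K : ℕ, K0 ≤ K ∧ c K = sInf T := Nat.sInf_mem hTne
  refine ⟨c K, K + 1, by omega, ?_⟩
  intro k hk
  have hkK0 : K0 ≤ k := by omega
  have h1 : c k ≤ c K := by
    exact hchain K k hK0le (by omega)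
  have h2 : c K ≤ c k := by
    rw [hKc]
    exact Nat.sInf_le ⟨k, hkK0, rfl⟩
  have hceq : c k = c K := le_antisymm h1 h2
  have hge := ke_le_largeDk (G := G) k
  have hgeK := ke_le_largeDk (G := G) K
  simp only [hc] at hceq ⊢
  omega

end aux7


/-- Let `G` be a finite group and `e(G) = max {ord g : g ∈ G}`. Then there exist constants
`C ∈ ℕ₀` and `K ∈ ℕ` such that `D_k(G) = k·e(G) + C` for all `k ≥ K`. -/
theorem stmt19 {G : Type*} [Group G] [Finite G] :
    ∃ (C K : ℕ), 1 ≤ K ∧ ∀ k : ℕ, K ≤ k →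
      largeDk G k = k * sSup (Set.range (orderOf : G → ℕ)) + C := by
  classical
  letI := Fintype.ofFinite G
  exact largeDk_eventually_linear
end
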